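/- If H is a K_4-free graph that vertex-arrows (K_{1,1,2}, K_{1,2,2}), then the join G = K_1 + H is K_5-free and edge-arrows (K_3, J_4). Consequently F_e(K_3, J_4; 5) ≤ 1 + F_v(K_{1,1,2}, K_{1,2,2}; 4). -/

import Mathlib

open SimpleGraph

/-- `Copies G F S`: `G` contains a copy of `F` all of whose vertices lie in `S`. -/
def Copies {α β : Type*} (G : SimpleGraph α) (F : SimpleGraph β) (S : Set α) : Prop :=
  ∃ f : β ↪ α, (∀ a b, F.Adj a b → G.Adj (f a) (f b)) ∧ ∀ a, f a ∈ S

/-- `G` vertex-arrows the family `F` of graphs. -/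
def VArrows {α : Type*} (G : SimpleGraph α) {r : ℕ} {β : Fin r → Type*}
    (F : ∀ i, SimpleGraph (β i)) : Prop :=
  ∀ C : α → Fin r, ∃ i, Copies G (F i) {v | C v = i}

/-- `G` vertex-arrows `(F1, F2)`. -/
def VArrows2 {α β γ : Type*} (G : SimpleGraph α) (F1 : SimpleGraph β) (F2 : SimpleGraph γ) :
    Prop :=
  ∀ C : α → Bool, Copies G F1 {v | C v = true} ∨ Copies G F2 {v | C v = false}

/-- `G` edge-arrows `(F1, F2)`: every red subgraph `R ≤ G` yields a red `F1` or a blue `F2`. -/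
def EArrows2 {α β γ : Type*} (G : SimpleGraph α) (F1 : SimpleGraph β) (F2 : SimpleGraph γ) :
    Prop :=
  ∀ R : SimpleGraph α, R ≤ G → Copies R F1 Set.univ ∨ Copies (G \ R) F2 Set.univ

/-- Vertex Folkman number for a family of target graphs. -/
noncomputable def Fv {r : ℕ} {β : Fin r → Type*} (F : ∀ i, SimpleGraph (β i)) (k : ℕ) : ℕ :=
  sInf {n | ∃ G : SimpleGraph (Fin n), G.CliqueFree k ∧ VArrows G F}

/-- Two-color vertex Folkman number. -/
noncomputable def Fv2 {β γ : Type*} (F1 : SimpleGraph β) (F2 : SimpleGraph γ) (k : ℕ) : ℕ :=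
  sInf {n | ∃ G : SimpleGraph (Fin n), G.CliqueFree k ∧ VArrows2 G F1 F2}

/-- Two-color edge Folkman number. -/
noncomputable def Fe2 {β γ : Type*} (F1 : SimpleGraph β) (F2 : SimpleGraph γ) (k : ℕ) : ℕ :=
  sInf {n | ∃ G : SimpleGraph (Fin n), G.CliqueFree k ∧ EArrows2 G F1 F2}

/-- Lexicographic product `G[H]`. -/
def lexProd {α β : Type*} (G : SimpleGraph α) (H : SimpleGraph β) : SimpleGraph (α × β) where
  Adj x y := G.Adj x.1 y.1 ∨ (x.1 = y.1 ∧ H.Adj x.2 y.2)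
  symm := ⟨by rintro x y (h | ⟨e, h⟩); exacts [Or.inl h.symm, Or.inr ⟨e.symm, h.symm⟩]⟩
  loopless := ⟨by rintro x (h | ⟨_, h⟩); exacts [G.loopless.irrefl _ h, H.loopless.irrefl _ h]⟩

/-- Complete graph on `k` vertices. -/
def Kc (k : ℕ) : SimpleGraph (Fin k) := completeGraph (Fin k)

/-- `J_k = K_k - e`: complete graph on `k` vertices minus one edge (the one
joining the two distinguished right-hand vertices). -/
def Jgraph (k : ℕ) : SimpleGraph (Fin (k - 2) ⊕ Fin 2) where
  Adj x y := x ≠ y ∧ ¬(x.isRight ∧ y.isRight)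
  symm := ⟨fun x y ⟨h1, h2⟩ => ⟨h1.symm, fun ⟨a, b⟩ => h2 ⟨b, a⟩⟩⟩
  loopless := ⟨fun x h => h.1 rfl⟩

/-- Cycle on `n` vertices. -/
def cycle (n : ℕ) : SimpleGraph (ZMod n) where
  Adj i j := i ≠ j ∧ (i - j = 1 ∨ j - i = 1)
  symm := ⟨fun i j ⟨h1, h2⟩ => ⟨h1.symm, h2.symm⟩⟩
  loopless := ⟨fun i h => h.1 rfl⟩

/-- Join of two graphs: disjoint union plus all cross edges. -/
def graphJoin {α β : Type*} (G : SimpleGraph α) (H : SimpleGraph β) :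
    SimpleGraph (α ⊕ β) where
  Adj x y := (∃ a b, x = .inl a ∧ y = .inl b ∧ G.Adj a b) ∨
             (∃ a b, x = .inr a ∧ y = .inr b ∧ H.Adj a b) ∨
             (x.isLeft ∧ y.isRight) ∨ (x.isRight ∧ y.isLeft)
  symm := by
    constructor
    rintro x y (⟨a, b, rfl, rfl, h⟩ | ⟨a, b, rfl, rfl, h⟩ | ⟨h1, h2⟩ | ⟨h1, h2⟩)
    · exact Or.inl ⟨b, a, rfl, rfl, h.symm⟩
    · exact Or.inr (Or.inl ⟨b, a, rfl, rfl, h.symm⟩)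
    · exact Or.inr (Or.inr (Or.inr ⟨h2, h1⟩))
    · exact Or.inr (Or.inr (Or.inl ⟨h2, h1⟩))
  loopless := by
    constructor
    rintro x (⟨a, b, rfl, h, h'⟩ | ⟨a, b, rfl, h, h'⟩ | ⟨h1, h2⟩ | ⟨h1, h2⟩)
    · cases h; exact G.loopless.irrefl _ h'
    · cases h; exact H.loopless.irrefl _ h'
    · cases x <;> simp_all
    · cases x <;> simp_all

/-- Clique number: the largest size of a clique. -/
noncomputable def cliqueNum' {α : Type*} (G : SimpleGraph α) : ℕ :=
  sSup {n | ∃ s : Finset α, G.IsNClique n s}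


section AuxProofs

open SimpleGraph

private lemma mkK3 {V : Type*} (R : SimpleGraph V) {p q r : V} (hpq : R.Adj p q)
    (hpr : R.Adj p r) (hqr : R.Adj q r) : Copies R (Kc 3) Set.univ := by
  have n1 := hpq.ne; have n2 := hpr.ne; have n3 := hqr.ne
  have s1 := hpq.symm; have s2 := hpr.symm; have s3 := hqr.symm
  refine ⟨⟨![p, q, r], ?_⟩, ?_, fun a => trivial⟩
  · intro i j hij
    fin_cases i <;> fin_cases j <;> simp_all
  · intro a b hab
    change R.Adj (![p, q, r] a) (![p, q, r] b)
    fin_cases a <;> fin_cases b <;> simp_all [Kc, completeGraph]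

private lemma mkJ4 {V : Type*} (B : SimpleGraph V) {p q r s : V} (hpq : B.Adj p q)
    (hpr : B.Adj p r) (hps : B.Adj p s) (hqr : B.Adj q r) (hqs : B.Adj q s) (hrs : r ≠ s) :
    Copies B (Jgraph 4) Set.univ := by
  have n1 := hpq.ne; have n2 := hpr.ne; have n3 := hps.ne
  have n4 := hqr.ne; have n5 := hqs.ne
  have s1 := hpq.symm; have s2 := hpr.symm; have s3 := hps.symm
  have s4 := hqr.symm; have s5 := hqs.symm
  refine ⟨⟨Sum.elim ![p, q] ![r, s], ?_⟩, ?_, fun a => trivial⟩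
  · intro i j hij
    rcases i with i | i <;> rcases j with j | j <;> fin_cases i <;> fin_cases j <;> simp_all
  · intro a b hab
    obtain ⟨hne, hnr⟩ : _ ∧ _ := hab
    change B.Adj (Sum.elim ![p, q] ![r, s] a) (Sum.elim ![p, q] ![r, s] b)
    rcases a with a | a <;> rcases b with b | b <;> fin_cases a <;> fin_cases b <;> simp_all

private lemma keyBool (p1 p2 p3 p4 q1 q2 q3 q4 : Prop) :
    (p1 ∧ p3 ∧ q1) ∨ (p1 ∧ p4 ∧ q2) ∨ (p2 ∧ p3 ∧ q3) ∨ (p2 ∧ p4 ∧ q4)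
    ∨ (¬p1 ∧ ¬p2) ∨ (¬p3 ∧ ¬p4) ∨ (¬q1 ∧ ¬q2) ∨ (¬q3 ∧ ¬q4) ∨ (¬q1 ∧ ¬q3) ∨ (¬q2 ∧ ¬q4)
    ∨ (¬p1 ∧ ¬p3) ∨ (¬p1 ∧ ¬p4) ∨ (¬p2 ∧ ¬p3) ∨ (¬p2 ∧ ¬p4) := by tauto

private lemma master {α : Type*} (H : SimpleGraph α) (hfree : H.CliqueFree 4)
    (harr : VArrows2 H (completeMultipartiteGraph (fun i : Fin 3 => Fin (![1, 1, 2] i)))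
      (completeMultipartiteGraph (fun i : Fin 3 => Fin (![1, 2, 2] i)))) :
    (graphJoin (Kc 1) H).CliqueFree 5 ∧ EArrows2 (graphJoin (Kc 1) H) (Kc 3) (Jgraph 4) := by
  classical
  have ginr : ∀ a b : α, (graphJoin (Kc 1) H).Adj (Sum.inr a) (Sum.inr b) ↔ H.Adj a b := by
    intro a b
    constructor
    · rintro (⟨x, y, hx, hy, h⟩ | ⟨x, y, hx, hy, h⟩ | ⟨h1, h2⟩ | ⟨h1, h2⟩)
      · exact absurd hx (by simp)
      · simp only [Sum.inr.injEq] at hx hy; subst hx; subst hy; exact h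
      · simp at h1
      · simp at h2
    · intro h; exact Or.inr (Or.inl ⟨a, b, rfl, rfl, h⟩)
  have gcross : ∀ b : α, (graphJoin (Kc 1) H).Adj (Sum.inl 0) (Sum.inr b) :=
    fun b => Or.inr (Or.inr (Or.inl ⟨rfl, rfl⟩))
  constructor
  · -- Clique-freeness
    intro s hs
    set t : Finset α := s.preimage Sum.inr Sum.inr_injective.injOn with ht
    have hsub : s ⊆ insert (Sum.inl 0) (t.image Sum.inr) := by
      intro x hx
      rcases x with x | x
      · have : x = 0 := Subsingleton.elim _ _
        subst this; exact Finset.mem_insert_self _ _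
      · exact Finset.mem_insert_of_mem
          (Finset.mem_image_of_mem _ (Finset.mem_preimage.2 hx))
    have hle : 5 ≤ 1 + t.card := by
      have h1 : s.card ≤ (insert (Sum.inl (0 : Fin 1)) (t.image Sum.inr)).card :=
        Finset.card_le_card hsub
      have h2 : (insert (Sum.inl (0 : Fin 1)) (t.image Sum.inr)).card
          ≤ (t.image Sum.inr).card + 1 := Finset.card_insert_le _ _
      have h3 : (t.image (Sum.inr : α → Fin 1 ⊕ α)).card = t.card :=
        Finset.card_image_of_injective _ Sum.inr_injective
      have hcard := hs.2
      omega
    obtain ⟨t', ht', hc4⟩ := Finset.exists_subset_card_eq (show 4 ≤ t.card by omega)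
    refine hfree t' ⟨?_, hc4⟩
    intro a ha b hb hab
    have hma : Sum.inr a ∈ s := Finset.mem_preimage.1 (ht' ha)
    have hmb : Sum.inr b ∈ s := Finset.mem_preimage.1 (ht' hb)
    exact (ginr a b).1 (hs.1 hma hmb (fun h => hab (Sum.inr_injective h)))
  · -- Edge-arrowing
    intro R hR
    have hblue : ∀ p q : α, H.Adj p q → ¬R.Adj (Sum.inr p) (Sum.inr q) →
        ((graphJoin (Kc 1) H) \ R).Adj (Sum.inr p) (Sum.inr q) := by
      intro p q h hn
      rw [SimpleGraph.sdiff_adj]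
      exact ⟨(ginr p q).2 h, hn⟩
    have nei : ∀ {a b : α}, a ≠ b → (Sum.inr a : Fin 1 ⊕ α) ≠ Sum.inr b :=
      fun h hc => h (Sum.inr_injective hc)
    set C : α → Bool := fun v => decide (R.Adj (Sum.inl 0) (Sum.inr v)) with hC
    rcases harr C with ⟨f, hf, hfS⟩ | ⟨f, hf, hfS⟩
    · -- red K_{1,1,2}
      have hred : ∀ a, R.Adj (Sum.inl 0) (Sum.inr (f a)) := by
        intro a
        have := hfS a
        simp only [Set.mem_setOf_eq, hC, decide_eq_true_eq] at this
        exact this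
      have adj : ∀ i j : Σ k : Fin 3, Fin (![1, 1, 2] k), i.1 ≠ j.1 → H.Adj (f i) (f j) :=
        fun i j hij => hf i j (by simpa [completeMultipartiteGraph] using hij)
      set w1 := f ⟨0, ⟨0, by norm_num⟩⟩ with hw1
      set w2 := f ⟨1, ⟨0, by norm_num⟩⟩ with hw2
      set x1 := f ⟨2, ⟨0, by decide⟩⟩ with hx1
      set x2 := f ⟨2, ⟨1, by decide⟩⟩ with hx2
      have h12 : H.Adj w1 w2 := adj _ _ (by decide)
      have h1x1 : H.Adj w1 x1 := adj _ _ (by decide)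
      have h1x2 : H.Adj w1 x2 := adj _ _ (by decide)
      have h2x1 : H.Adj w2 x1 := adj _ _ (by decide)
      have h2x2 : H.Adj w2 x2 := adj _ _ (by decide)
      have hx12 : x1 ≠ x2 := f.injective.ne (by decide)
      by_cases e1 : R.Adj (Sum.inr w1) (Sum.inr w2)
      · exact Or.inl (mkK3 R (hred _) (hred _) e1)
      by_cases e2 : R.Adj (Sum.inr w1) (Sum.inr x1)
      · exact Or.inl (mkK3 R (hred _) (hred _) e2)
      by_cases e3 : R.Adj (Sum.inr w1) (Sum.inr x2)
      · exact Or.inl (mkK3 R (hred _) (hred _) e3)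
      by_cases e4 : R.Adj (Sum.inr w2) (Sum.inr x1)
      · exact Or.inl (mkK3 R (hred _) (hred _) e4)
      by_cases e5 : R.Adj (Sum.inr w2) (Sum.inr x2)
      · exact Or.inl (mkK3 R (hred _) (hred _) e5)
      exact Or.inr (mkJ4 _ (hblue _ _ h12 e1) (hblue _ _ h1x1 e2) (hblue _ _ h1x2 e3)
        (hblue _ _ h2x1 e4) (hblue _ _ h2x2 e5) (nei hx12))
    · -- blue K_{1,2,2}
      have hucr : ∀ a, ((graphJoin (Kc 1) H) \ R).Adj (Sum.inl 0) (Sum.inr (f a)) := by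
        intro a
        have := hfS a
        simp only [Set.mem_setOf_eq, hC, decide_eq_false_iff_not] at this
        rw [SimpleGraph.sdiff_adj]
        exact ⟨gcross _, this⟩
      have adj : ∀ i j : Σ k : Fin 3, Fin (![1, 2, 2] k), i.1 ≠ j.1 → H.Adj (f i) (f j) :=
        fun i j hij => hf i j (by simpa [completeMultipartiteGraph] using hij)
      set z := f ⟨0, ⟨0, by norm_num⟩⟩ with hz
      set a1 := f ⟨1, ⟨0, by norm_num⟩⟩ with ha1
      set a2 := f ⟨1, ⟨1, by norm_num⟩⟩ with ha2
      set b1 := f ⟨2, ⟨0, by decide⟩⟩ with hb1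
      set b2 := f ⟨2, ⟨1, by decide⟩⟩ with hb2
      have uz : ((graphJoin (Kc 1) H) \ R).Adj (Sum.inl 0) (Sum.inr z) := hucr _
      have ua1 : ((graphJoin (Kc 1) H) \ R).Adj (Sum.inl 0) (Sum.inr a1) := hucr _
      have ua2 : ((graphJoin (Kc 1) H) \ R).Adj (Sum.inl 0) (Sum.inr a2) := hucr _
      have ub1 : ((graphJoin (Kc 1) H) \ R).Adj (Sum.inl 0) (Sum.inr b1) := hucr _
      have ub2 : ((graphJoin (Kc 1) H) \ R).Adj (Sum.inl 0) (Sum.inr b2) := hucr _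
      have hza1 : H.Adj z a1 := adj _ _ (by decide)
      have hza2 : H.Adj z a2 := adj _ _ (by decide)
      have hzb1 : H.Adj z b1 := adj _ _ (by decide)
      have hzb2 : H.Adj z b2 := adj _ _ (by decide)
      have h11 : H.Adj a1 b1 := adj _ _ (by decide)
      have h12 : H.Adj a1 b2 := adj _ _ (by decide)
      have h21 : H.Adj a2 b1 := adj _ _ (by decide)
      have h22 : H.Adj a2 b2 := adj _ _ (by decide)
      have haa : a1 ≠ a2 := f.injective.ne (by decide)
      have hbb : b1 ≠ b2 := f.injective.ne (by decide)
      rcases keyBool (R.Adj (Sum.inr z) (Sum.inr a1)) (R.Adj (Sum.inr z) (Sum.inr a2))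
          (R.Adj (Sum.inr z) (Sum.inr b1)) (R.Adj (Sum.inr z) (Sum.inr b2))
          (R.Adj (Sum.inr a1) (Sum.inr b1)) (R.Adj (Sum.inr a1) (Sum.inr b2))
          (R.Adj (Sum.inr a2) (Sum.inr b1)) (R.Adj (Sum.inr a2) (Sum.inr b2)) with
        ⟨hA, hB, hD⟩ | ⟨hA, hB, hD⟩ | ⟨hA, hB, hD⟩ | ⟨hA, hB, hD⟩ |
        ⟨hA, hB⟩ | ⟨hA, hB⟩ | ⟨hA, hB⟩ | ⟨hA, hB⟩ | ⟨hA, hB⟩ | ⟨hA, hB⟩ |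
        ⟨hA, hB⟩ | ⟨hA, hB⟩ | ⟨hA, hB⟩ | ⟨hA, hB⟩
      · exact Or.inl (mkK3 R hA hB hD)
      · exact Or.inl (mkK3 R hA hB hD)
      · exact Or.inl (mkK3 R hA hB hD)
      · exact Or.inl (mkK3 R hA hB hD)
      · exact Or.inr (mkJ4 _ uz ua1 ua2 (hblue _ _ hza1 hA) (hblue _ _ hza2 hB) (nei haa))
      · exact Or.inr (mkJ4 _ uz ub1 ub2 (hblue _ _ hzb1 hA) (hblue _ _ hzb2 hB) (nei hbb))
      · exact Or.inr (mkJ4 _ ua1 ub1 ub2 (hblue _ _ h11 hA) (hblue _ _ h12 hB) (nei hbb))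
      · exact Or.inr (mkJ4 _ ua2 ub1 ub2 (hblue _ _ h21 hA) (hblue _ _ h22 hB) (nei hbb))
      · exact Or.inr (mkJ4 _ ub1 ua1 ua2 ((hblue _ _ h11 hA).symm) ((hblue _ _ h21 hB).symm)
          (nei haa))
      · exact Or.inr (mkJ4 _ ub2 ua1 ua2 ((hblue _ _ h12 hA).symm) ((hblue _ _ h22 hB).symm)
          (nei haa))
      · exact Or.inr (mkJ4 _ uz ua1 ub1 (hblue _ _ hza1 hA) (hblue _ _ hzb1 hB) (nei h11.ne))
      · exact Or.inr (mkJ4 _ uz ua1 ub2 (hblue _ _ hza1 hA) (hblue _ _ hzb2 hB) (nei h12.ne))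
      · exact Or.inr (mkJ4 _ uz ua2 ub1 (hblue _ _ hza2 hA) (hblue _ _ hzb1 hB) (nei h21.ne))
      · exact Or.inr (mkJ4 _ uz ua2 ub2 (hblue _ _ hza2 hA) (hblue _ _ hzb2 hB) (nei h22.ne))

private lemma copies_trans {V W β : Type*} (e : V ≃ W) (A : SimpleGraph V) (B : SimpleGraph W)
    (h : ∀ a b, A.Adj a b → B.Adj (e a) (e b)) (F : SimpleGraph β) :
    Copies A F Set.univ → Copies B F Set.univ :=
  fun ⟨f, hf, _⟩ => ⟨f.trans e.toEmbedding, fun a b hab => h _ _ (hf a b hab), fun _ => trivial⟩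

private lemma cliqueFree_trans {V W : Type*} (e : V ≃ W) (A : SimpleGraph V) (B : SimpleGraph W)
    (h : ∀ a b, B.Adj (e a) (e b) ↔ A.Adj a b) {n : ℕ} (hA : A.CliqueFree n) :
    B.CliqueFree n := by
  refine SimpleGraph.CliqueFree.comap ⟨SimpleGraph.Embedding.toCopy (⟨e.symm.toEmbedding, ?_⟩ : B ↪g A)⟩ hA
  intro x y
  simpa using (h (e.symm x) (e.symm y)).symm

private lemma varrows_trans {V W β γ : Type*} (e : V ≃ W) (A : SimpleGraph V)
    (B : SimpleGraph W) (h : ∀ a b, B.Adj (e a) (e b) ↔ A.Adj a b)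
    (F1 : SimpleGraph β) (F2 : SimpleGraph γ) (hv : VArrows2 A F1 F2) : VArrows2 B F1 F2 := by
  intro C
  rcases hv (fun v => C (e v)) with ⟨f, hf, hS⟩ | ⟨f, hf, hS⟩
  · exact Or.inl ⟨f.trans e.toEmbedding, fun a b hab => (h _ _).2 (hf a b hab), fun a => hS a⟩
  · exact Or.inr ⟨f.trans e.toEmbedding, fun a b hab => (h _ _).2 (hf a b hab), fun a => hS a⟩

private lemma earrows_trans {V W β γ : Type*} (e : V ≃ W) (A : SimpleGraph V)
    (B : SimpleGraph W) (h : ∀ a b, B.Adj (e a) (e b) ↔ A.Adj a b)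
    (F1 : SimpleGraph β) (F2 : SimpleGraph γ) (hE : EArrows2 A F1 F2) : EArrows2 B F1 F2 := by
  intro R' hR'
  rcases hE (SimpleGraph.comap e R') (fun a b hab => (h a b).1 (hR' hab)) with h1 | h1
  · exact Or.inl (copies_trans e _ _ (fun a b hab => hab) F1 h1)
  · refine Or.inr (copies_trans e _ _ ?_ F2 h1)
    intro a b hab
    rw [SimpleGraph.sdiff_adj] at hab ⊢
    exact ⟨(h a b).2 hab.1, fun hc => hab.2 hc⟩

end AuxProofs

/-- If `H` is `K_4`-free and vertex-arrows `(K_{1,1,2},K_{1,2,2})`, then `K_1 + H` is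
`K_5`-free and edge-arrows `(K_3,J_4)`; consequently
`F_e(K_3,J_4;5) ≤ 1 + F_v(K_{1,1,2},K_{1,2,2};4)`. -/
theorem join_K1_edge_arrows_K3_J4 {α : Type*} [Fintype α] (H : SimpleGraph α)
    (hfree : H.CliqueFree 4)
    (harr : VArrows2 H (completeMultipartiteGraph (fun i : Fin 3 => Fin (![1, 1, 2] i)))
      (completeMultipartiteGraph (fun i : Fin 3 => Fin (![1, 2, 2] i)))) :
    (graphJoin (Kc 1) H).CliqueFree 5 ∧
    EArrows2 (graphJoin (Kc 1) H) (Kc 3) (Jgraph 4) ∧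
    Fe2 (Kc 3) (Jgraph 4) 5 ≤
      1 + Fv2 (completeMultipartiteGraph (fun i : Fin 3 => Fin (![1, 1, 2] i)))
        (completeMultipartiteGraph (fun i : Fin 3 => Fin (![1, 2, 2] i))) 4 := by
  obtain ⟨hcf, hea⟩ := master H hfree harr
  refine ⟨hcf, hea, ?_⟩
  classical
  have hne : ∃ n, n ∈ {n | ∃ G : SimpleGraph (Fin n), G.CliqueFree 4 ∧
      VArrows2 G (completeMultipartiteGraph (fun i : Fin 3 => Fin (![1, 1, 2] i)))
        (completeMultipartiteGraph (fun i : Fin 3 => Fin (![1, 2, 2] i)))} := by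
    refine ⟨Fintype.card α, SimpleGraph.comap (Fintype.equivFin α).symm H, ?_, ?_⟩
    · exact cliqueFree_trans (Fintype.equivFin α) H _ (fun a b => by simp) hfree
    · exact varrows_trans (Fintype.equivFin α) H _ (fun a b => by simp) _ _ harr
  have hmem := Nat.sInf_mem hne
  obtain ⟨G0, hG0f, hG0a⟩ := hmem
  obtain ⟨hcf0, hea0⟩ := master G0 hG0f hG0a
  refine Nat.sInf_le ?_
  exact ⟨SimpleGraph.comap finSumFinEquiv.symm (graphJoin (Kc 1) G0),
    cliqueFree_trans finSumFinEquiv _ _ (fun a b => by simp; exact Iff.rfl) hcf0,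
    earrows_trans finSumFinEquiv _ _ (fun a b => by simp; exact Iff.rfl) _ _ hea0⟩
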